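/- Let m be a rational number such that 2m^14 − 41m^12 − 328m^10 − 967m^8 − 1382m^6 − 1047m^4 − 308m^2 − 25 ≠ 0, and define u = m(m+1)^2(m−1)^3(m^2+3)(7m^6 + 23m^4 + 29m^2 + 5) / (2m^14 − 41m^12 − 328m^10 − 967m^8 − 1382m^6 − 1047m^4 − 308m^2 − 25). Then φ(u) is the square of a rational number, where φ(u) = (m^6 − 26m^4 − 31m^2 − 8)(m+1)^2·u^4 − 4m(m+1)(m^2+3)(m^4 − 6m^2 − 3)·u^3 + 2(m−1)(m+1)(3m^6 + 28m^4 + 31m^2 + 2)·u^2 − 4m(m−1)(m^2+3)(m^4 + 6m^2 + 1)·u + m^2(m+1)^2(m−1)^4. -/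

import Mathlib

theorem stmt_10 (m u : ℚ)
    (hden : 2 * m ^ 14 - 41 * m ^ 12 - 328 * m ^ 10 - 967 * m ^ 8 -
      1382 * m ^ 6 - 1047 * m ^ 4 - 308 * m ^ 2 - 25 ≠ 0)
    (hu : u = m * (m + 1) ^ 2 * (m - 1) ^ 3 * (m ^ 2 + 3) *
        (7 * m ^ 6 + 23 * m ^ 4 + 29 * m ^ 2 + 5) /
      (2 * m ^ 14 - 41 * m ^ 12 - 328 * m ^ 10 - 967 * m ^ 8 -
        1382 * m ^ 6 - 1047 * m ^ 4 - 308 * m ^ 2 - 25)) :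
    ∃ r : ℚ, (m ^ 6 - 26 * m ^ 4 - 31 * m ^ 2 - 8) * (m + 1) ^ 2 * u ^ 4 -
        4 * m * (m + 1) * (m ^ 2 + 3) * (m ^ 4 - 6 * m ^ 2 - 3) * u ^ 3 +
        2 * (m - 1) * (m + 1) * (3 * m ^ 6 + 28 * m ^ 4 + 31 * m ^ 2 + 2) * u ^ 2 -
        4 * m * (m - 1) * (m ^ 2 + 3) * (m ^ 4 + 6 * m ^ 2 + 1) * u +
        m ^ 2 * (m + 1) ^ 2 * (m - 1) ^ 4 = r ^ 2 := by
  refine ⟨(25 * m ^ 32 - 25 * m ^ 31 - 260 * m ^ 30 + 260 * m ^ 29 - 9520 * m ^ 28 +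
      9520 * m ^ 27 - 94027 * m ^ 26 + 94027 * m ^ 25 - 494601 * m ^ 24 + 494601 * m ^ 23 -
      1613126 * m ^ 22 + 1613126 * m ^ 21 - 3395662 * m ^ 20 + 3395662 * m ^ 19 -
      4391505 * m ^ 18 + 4391505 * m ^ 17 - 2520857 * m ^ 16 + 2520857 * m ^ 15 +
      1773928 * m ^ 14 - 1773928 * m ^ 13 + 4718140 * m ^ 12 - 4718140 * m ^ 11 +
      3964451 * m ^ 10 - 3964451 * m ^ 9 + 1659049 * m ^ 8 - 1659049 * m ^ 7 +
      363010 * m ^ 6 - 363010 * m ^ 5 + 39330 * m ^ 4 - 39330 * m ^ 3 + 1625 * m ^ 2 -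
      1625 * m) /
    (2 * m ^ 14 - 41 * m ^ 12 - 328 * m ^ 10 - 967 * m ^ 8 - 1382 * m ^ 6 -
      1047 * m ^ 4 - 308 * m ^ 2 - 25) ^ 2, ?_⟩
  subst hu
  obtain ⟨D, hD⟩ : ∃ D : ℚ, D = 2 * m ^ 14 - 41 * m ^ 12 - 328 * m ^ 10 - 967 * m ^ 8 -
      1382 * m ^ 6 - 1047 * m ^ 4 - 308 * m ^ 2 - 25 := ⟨_, rfl⟩
  rw [← hD] at hden ⊢
  field_simp
  subst hD
  ring
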